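/- Let 2 ≤ ℓ ≤ m and 0 ≤ p ≠ q < 2^m with |φ(p) - φ(q)| < 2^{-ℓ+1}, where φ(n) = Σ n_i 2^{-i}. Suppose there exists 2 ≤ k ≤ ℓ-1 with (p⊕q)_{k-1} = 0 and (p⊕q)_k = 1. Then (p⊕q)_i = 0 for 1 ≤ i ≤ k-1, (p⊕q)_i = 1 for k ≤ i ≤ ℓ-1, and (p⊕q)_i ≠ 0 for some ℓ ≤ i ≤ m. -/

import Mathlib

open Finset

/-- The `i`-th binary digit of `n` (1-indexed: `n = Σ nᵢ 2^(i-1)`). -/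
def bit (n i : ℕ) : ℕ := if Nat.testBit n (i-1) then 1 else 0

/-- `φ` of the digit vector of `n` truncated to `m` digits: `Σ nᵢ 2^(-i)`. -/
noncomputable def phi (m n : ℕ) : ℝ :=
  ∑ i ∈ Finset.Icc 1 m, (bit n i : ℝ) * (2:ℝ) ^ (-(i:ℤ))

/-- The `i`-th coordinate of `P_m · (digit vector of n)` over `F₂`, where
`P_m[i][j] = C(j-1, i-1) mod 2` is the upper-triangular Pascal matrix. -/
def pbit (m n i : ℕ) : ℕ :=
  (∑ j ∈ Finset.Icc 1 m, (Nat.choose (j-1) (i-1) % 2) * bit n j) % 2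

/-- `φ(P_m · n)`. -/
noncomputable def phiP (m n : ℕ) : ℝ :=
  ∑ i ∈ Finset.Icc 1 m, (pbit m n i : ℝ) * (2:ℝ) ^ (-(i:ℤ))

/-- The `n`-th point of the two-dimensional Sobol' sequence (with `n < 2^m`). -/
noncomputable def sobol (m n : ℕ) : ℝ × ℝ := (phi m n, phiP m n)

/-- ℓ^∞ distance on ℝ². -/
noncomputable def linf (a b : ℝ × ℝ) : ℝ := max |a.1 - b.1| |a.2 - b.2|

/-- ℓ^∞ separation radius of the first `N` Sobol' points (digit length `m`). -/
noncomputable def sep (m N : ℕ) : ℝ :=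
  (1/2) * sInf {d : ℝ | ∃ p q : ℕ, p < N ∧ q < N ∧ p ≠ q ∧ d = linf (sobol m p) (sobol m q)}

/-- ℓ^∞ covering radius of the first `N` Sobol' points (digit length `m`). -/
noncomputable def cov (m N : ℕ) : ℝ :=
  sSup {r : ℝ | ∃ x : ℝ × ℝ, x.1 ∈ Set.Icc (0:ℝ) 1 ∧ x.2 ∈ Set.Icc (0:ℝ) 1 ∧
    r = sInf {d : ℝ | ∃ n : ℕ, n < N ∧ d = linf x (sobol m n)}}

lemma bit_le_one (n i : ℕ) : bit n i ≤ 1 := by unfold bit; split <;> simp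

lemma bit_xor_abs (p q i : ℕ) :
    (bit (p ^^^ q) i : ℝ) = |(bit q i : ℝ) - (bit p i : ℝ)| := by
  unfold bit
  cases hp : Nat.testBit p (i-1) <;> cases hq : Nat.testBit q (i-1) <;>
    simp [Nat.testBit_xor, hp, hq]

lemma geo (a b : ℕ) (h : a ≤ b) :
    ∑ i ∈ Ioc a b, (2:ℝ)^(-(i:ℤ)) = 2^(-(a:ℤ)) - 2^(-(b:ℤ)) := by
  induction b, h using Nat.le_induction with
  | base => simp
  | succ b hb ih =>
    rw [← Finset.Icc_add_one_left_eq_Ioc] at ih ⊢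
    rw [Finset.sum_Icc_succ_top (by omega), ih]
    have h2 : (2:ℝ)^(-((b:ℤ) + 1)) = 2^(-(b:ℤ)) / 2 := by
      rw [neg_add, zpow_add₀ (by norm_num : (2:ℝ) ≠ 0)]
      norm_num
      ring
    push_cast
    rw [h2]
    ring

lemma term_le (n i : ℕ) : (bit n i : ℝ) * 2^(-(i:ℤ)) ≤ 2^(-(i:ℤ)) := by
  have h1 : (bit n i : ℝ) ≤ 1 := by exact_mod_cast bit_le_one n i
  have h2 : (0:ℝ) ≤ 2^(-(i:ℤ)) := by positivity
  nlinarith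

lemma main_bound (m p q j : ℕ) (hj1 : 1 ≤ j) (hjm : j ≤ m)
    (hbj : bit (p ^^^ q) j = 1)
    (hmin : ∀ i, 1 ≤ i → i < j → bit (p ^^^ q) i = 0) :
    (2:ℝ)^(-(j:ℤ)) - ∑ i ∈ Ioc j m, (bit (p ^^^ q) i : ℝ) * 2^(-(i:ℤ))
      ≤ |phi m q - phi m p| := by
  set d : ℕ → ℝ := fun i => ((bit q i : ℝ) - bit p i) * 2^(-(i:ℤ)) with hdd
  have hd : phi m q - phi m p = ∑ i ∈ Icc 1 m, d i := by
    unfold phi; rw [← Finset.sum_sub_distrib]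
    exact Finset.sum_congr rfl (fun i _ => by rw [hdd]; ring)
  have hIcc : Finset.Icc 1 m = Finset.Ioc 0 m := Finset.Icc_add_one_left_eq_Ioc 0 m
  have hsplit : ∑ i ∈ Ioc 0 j, d i + ∑ i ∈ Ioc j m, d i = ∑ i ∈ Ioc 0 m, d i :=
    Finset.sum_Ioc_consecutive _ (Nat.zero_le j) hjm
  have hS1 : ∑ i ∈ Ioc 0 j, d i = d j := by
    apply Finset.sum_eq_single_of_mem
    · simp only [Finset.mem_Ioc]; omega
    · intro b hb hbj'
      simp only [Finset.mem_Ioc] at hb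
      have hz : bit (p ^^^ q) b = 0 := hmin b hb.1 (lt_of_le_of_ne hb.2 hbj')
      have : ((bit (p ^^^ q) b : ℕ) : ℝ) = 0 := by rw [hz]; simp
      rw [bit_xor_abs] at this
      have h0 : (bit q b : ℝ) - bit p b = 0 := abs_eq_zero.mp this
      rw [hdd]; simp only
      rw [h0, zero_mul]
  have habs1 : |d j| = 2^(-(j:ℤ)) := by
    rw [hdd]; simp only
    rw [abs_mul, ← bit_xor_abs, hbj,
      abs_of_pos (by positivity : (0:ℝ) < (2:ℝ)^(-(j:ℤ)))]
    simp
  have habs2 : |∑ i ∈ Ioc j m, d i|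
      ≤ ∑ i ∈ Ioc j m, (bit (p ^^^ q) i : ℝ) * 2^(-(i:ℤ)) := by
    refine (Finset.abs_sum_le_sum_abs _ _).trans (Finset.sum_le_sum fun i _ => ?_)
    rw [hdd]; simp only
    rw [abs_mul, ← bit_xor_abs,
      abs_of_pos (by positivity : (0:ℝ) < (2:ℝ)^(-(i:ℤ)))]
  have key : |d j| - |∑ i ∈ Ioc j m, d i| ≤ |d j + ∑ i ∈ Ioc j m, d i| := by
    have h := abs_sub_abs_le_abs_sub (d j) (-(∑ i ∈ Ioc j m, d i))
    rwa [abs_neg, sub_neg_eq_add] at h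
  rw [hd, hIcc, ← hsplit, hS1]
  linarith

lemma bound_with_zero (m p q j i₀ : ℕ) (hj1 : 1 ≤ j) (hji : j < i₀) (hi₀m : i₀ ≤ m)
    (hbj : bit (p ^^^ q) j = 1) (hb0 : bit (p ^^^ q) i₀ = 0)
    (hmin : ∀ i, 1 ≤ i → i < j → bit (p ^^^ q) i = 0) :
    (2:ℝ)^(-(i₀:ℤ)) < |phi m q - phi m p| := by
  have hjm : j ≤ m := le_trans hji.le hi₀m
  have hm := main_bound m p q j hj1 hjm hbj hmin
  set f : ℕ → ℝ := fun i => (bit (p ^^^ q) i : ℝ) * 2^(-(i:ℤ)) with hf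
  have hmem : i₀ ∈ Ioc j m := by simp [hji, hi₀m]
  have h1 : ∑ i ∈ Ioc j m, f i = ∑ i ∈ (Ioc j m).erase i₀, f i :=
    (Finset.sum_erase _ (by rw [hf]; simp [hb0])).symm
  have h2 : ∑ i ∈ (Ioc j m).erase i₀, f i ≤ ∑ i ∈ (Ioc j m).erase i₀, (2:ℝ)^(-(i:ℤ)) :=
    Finset.sum_le_sum fun i _ => term_le _ _
  have h3 : ∑ i ∈ (Ioc j m).erase i₀, (2:ℝ)^(-(i:ℤ))
      = (2^(-(j:ℤ)) - 2^(-(m:ℤ))) - 2^(-(i₀:ℤ)) := by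
    rw [Finset.sum_erase_eq_sub hmem, geo j m hjm]
  have hmm : (0:ℝ) < 2^(-(m:ℤ)) := by positivity
  linarith

theorem stmt_10 (ℓ m p q k : ℕ) (hℓ : 2 ≤ ℓ) (hℓm : ℓ ≤ m)
    (hp : p < 2 ^ m) (hq : q < 2 ^ m) (hpq : p ≠ q)
    (h1 : |phi m q - phi m p| < (2:ℝ) ^ (-(ℓ:ℤ) + 1))
    (hk1 : 2 ≤ k) (hk2 : k ≤ ℓ - 1)
    (hkm1 : bit (p ^^^ q) (k - 1) = 0) (hkk : bit (p ^^^ q) k = 1) :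
    (∀ i ∈ Finset.Icc 1 (k - 1), bit (p ^^^ q) i = 0) ∧
    (∀ i ∈ Finset.Icc k (ℓ - 1), bit (p ^^^ q) i = 1) ∧
    (∃ i ∈ Finset.Icc ℓ m, bit (p ^^^ q) i ≠ 0) := by
  classical
  have hb01 : ∀ n : ℕ, bit n 0 = bit n 1 := fun n => rfl
  have claim1 : ∀ i ∈ Finset.Icc 1 (k-1), bit (p ^^^ q) i = 0 := by
    by_contra hcon
    push_neg at hcon
    obtain ⟨i, hi, hne⟩ := hcon
    simp only [Finset.mem_Icc] at hi
    have hbi : bit (p ^^^ q) i = 1 := by have := bit_le_one (p ^^^ q) i; omega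
    have hex : ∃ t, bit (p ^^^ q) t = 1 := ⟨i, hbi⟩
    set j' := Nat.find hex with hj'
    have hj'le : j' ≤ i := Nat.find_le hbi
    set j := max j' 1 with hj
    have hPj : bit (p ^^^ q) j = 1 := by
      rcases Nat.eq_zero_or_pos j' with h0 | h0
      · have hs := Nat.find_spec hex
        rw [← hj', h0] at hs
        have hj1 : j = 1 := by omega
        rw [hj1, ← hb01]
        exact hs
      · have hjj : j = j' := by omega
        rw [hjj]; exact Nat.find_spec hex
    have hminj : ∀ t, 1 ≤ t → t < j → bit (p ^^^ q) t = 0 := by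
      intro t ht1 htj
      have htj' : t < j' := by omega
      have h2 := Nat.find_min hex htj'
      have h3 := bit_le_one (p ^^^ q) t
      omega
    have hjne : j ≠ k - 1 := fun h => by rw [h] at hPj; omega
    have hlt : (2:ℝ)^(-((k-1:ℕ):ℤ)) < |phi m q - phi m p| :=
      bound_with_zero m p q j (k-1) (le_max_right _ _) (by omega) (by omega) hPj hkm1 hminj
    have hle : (2:ℝ)^(-(ℓ:ℤ)+1) ≤ (2:ℝ)^(-((k-1:ℕ):ℤ)) := by
      apply zpow_le_zpow_right₀ (by norm_num : (1:ℝ) ≤ 2)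
      omega
    linarith
  have hminK : ∀ t, 1 ≤ t → t < k → bit (p ^^^ q) t = 0 := fun t ht1 htk =>
    claim1 t (Finset.mem_Icc.mpr ⟨ht1, by omega⟩)
  have claim2 : ∀ i ∈ Finset.Icc k (ℓ-1), bit (p ^^^ q) i = 1 := by
    by_contra hcon
    push_neg at hcon
    obtain ⟨i, hi, hne⟩ := hcon
    simp only [Finset.mem_Icc] at hi
    have hb0 : bit (p ^^^ q) i = 0 := by have := bit_le_one (p ^^^ q) i; omega
    have hik : i ≠ k := fun h => by rw [h] at hb0; omega
    have hlt : (2:ℝ)^(-(i:ℤ)) < |phi m q - phi m p| :=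
      bound_with_zero m p q k i (by omega) (by omega) (by omega) hkk hb0 hminK
    have hle : (2:ℝ)^(-(ℓ:ℤ)+1) ≤ (2:ℝ)^(-(i:ℤ)) := by
      apply zpow_le_zpow_right₀ (by norm_num : (1:ℝ) ≤ 2)
      omega
    linarith
  refine ⟨claim1, claim2, ?_⟩
  by_contra hcon
  push_neg at hcon
  have hm := main_bound m p q k (by omega) (by omega) hkk hminK
  set f : ℕ → ℝ := fun i => (bit (p ^^^ q) i : ℝ) * 2^(-(i:ℤ)) with hf
  have hsplit : ∑ i ∈ Ioc k (ℓ-1), f i + ∑ i ∈ Ioc (ℓ-1) m, f i = ∑ i ∈ Ioc k m, f i :=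
    Finset.sum_Ioc_consecutive _ (by omega) (by omega)
  have hzero : ∑ i ∈ Ioc (ℓ-1) m, f i = 0 := by
    apply Finset.sum_eq_zero
    intro i hi
    simp only [Finset.mem_Ioc] at hi
    rw [hf]; simp only
    rw [hcon i (Finset.mem_Icc.mpr ⟨by omega, hi.2⟩)]
    simp
  have hb : ∑ i ∈ Ioc k (ℓ-1), f i ≤ 2^(-(k:ℤ)) - 2^(-((ℓ-1:ℕ):ℤ)) := by
    calc ∑ i ∈ Ioc k (ℓ-1), f i ≤ ∑ i ∈ Ioc k (ℓ-1), (2:ℝ)^(-(i:ℤ)) :=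
          Finset.sum_le_sum fun i _ => term_le _ _
      _ = _ := geo k (ℓ-1) (by omega)
  have hcast : (2:ℝ)^(-((ℓ-1:ℕ):ℤ)) = 2^(-(ℓ:ℤ)+1) := by
    congr 1
    omega
  rw [hcast] at hb
  linarith
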